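/- Define S_{C1,C2}(x) = Σ_{m,n≥0} q^{6·C(m+1,2)+2·C(n+1,2)+2mn+C1·m+C2·n} x^{2m+n} / ((q²;q²)_m (q;q)_n). Then the following system holds: S_{−4,−1}(x) = S_{−4,−1}(xq) + xq S_{−2,0}(xq) + x²q² S_{0,0}(xq); S_{−2,−1}(x) = S_{−4,−1}(xq) + xq S_{−2,0}(xq); S_{−2,0}(x) = S_{−4,−1}(xq); S_{0,0}(x) = S_{−2,−1}(xq). -/

import Mathlib

noncomputable section

/-- Base coefficient ring: formal Laurent series over ℚ (a field), so that
integer powers of `q` and inverses of Pochhammer symbols make sense. -/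
abbrev R : Type := LaurentSeries ℚ

/-- The formal variable `q`. -/
def q : R := HahnSeries.single 1 1

/-- The finite q-Pochhammer symbol `(a; b)_n = ∏_{j=1}^n (1 - a b^(j-1))`. -/
def poch (a b : R) (n : ℕ) : R := ∏ j ∈ Finset.range n, (1 - a * b ^ j)

/-- Formal substitution `x ↦ c·x` in a power series in `x` over `R`. -/
def subst (c : R) (f : PowerSeries R) : PowerSeries R :=
  PowerSeries.mk fun k => c ^ k * PowerSeries.coeff k f

/-- `S_{C1,C2}(x) = Σ_{m,n} q^{6C(m+1,2)+2C(n+1,2)+2mn+C1 m+C2 n} x^{2m+n}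
/((q²;q²)_m (q;q)_n)`, as a power series in `x` over `R`. -/
def S (C1 C2 : ℤ) : PowerSeries R :=
  PowerSeries.mk fun k =>
    ∑ p ∈ (Finset.range (k+1) ×ˢ Finset.range (k+1)).filter
        (fun p => 2 * p.1 + p.2 = k),
      q ^ (6 * ((p.1+1).choose 2 : ℤ) + 2 * ((p.2+1).choose 2 : ℤ)
            + 2 * (p.1 : ℤ) * (p.2 : ℤ) + C1 * (p.1 : ℤ) + C2 * (p.2 : ℤ))
        * (poch (q ^ 2) (q ^ 2) p.1)⁻¹ * (poch q q p.2)⁻¹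

/-! ### Auxiliary infrastructure -/

lemma q_pow_nat (n : ℕ) : q ^ n = (HahnSeries.single (n : ℤ) 1 : R) := by
  simp [q, HahnSeries.single_pow]

lemma q_ne : (q : R) ≠ 0 := by
  intro h
  have := congrArg (fun f : R => HahnSeries.coeff f 1) h
  simp [q] at this

lemma one_sub_q_pow_ne (n : ℕ) (hn : n ≠ 0) : (1 : R) - q ^ n ≠ 0 := by
  intro h
  have := congrArg (fun f : R => HahnSeries.coeff f 0) h
  simp [q_pow_nat, HahnSeries.coeff_single] at this
  split_ifs at this with h'
  · exact hn (by exact_mod_cast h'.symm)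
  · simp at this

lemma poch_succ (a b : R) (n : ℕ) :
    poch a b (n + 1) = poch a b n * (1 - a * b ^ n) := Finset.prod_range_succ _ _

/-- The index set for the `k`-th coefficient. -/
def M (k : ℕ) : Finset (ℕ × ℕ) :=
  (Finset.range (k+1) ×ˢ Finset.range (k+1)).filter (fun p => 2 * p.1 + p.2 = k)

lemma mem_M {k : ℕ} {p : ℕ × ℕ} : p ∈ M k ↔ 2 * p.1 + p.2 = k := by
  unfold M
  simp only [Finset.mem_filter, Finset.mem_product, Finset.mem_range]
  omega

/-- The general summand. -/
def term (C1 C2 : ℤ) (p : ℕ × ℕ) : R :=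
  q ^ (6 * ((p.1+1).choose 2 : ℤ) + 2 * ((p.2+1).choose 2 : ℤ)
        + 2 * (p.1 : ℤ) * (p.2 : ℤ) + C1 * (p.1 : ℤ) + C2 * (p.2 : ℤ))
    * (poch (q ^ 2) (q ^ 2) p.1)⁻¹ * (poch q q p.2)⁻¹

lemma coeff_S (C1 C2 : ℤ) (k : ℕ) :
    PowerSeries.coeff k (S C1 C2) = ∑ p ∈ M k, term C1 C2 p := by
  rw [S, PowerSeries.coeff_mk]; rfl

lemma coeff_subst (c : R) (f : PowerSeries R) (k : ℕ) :
    PowerSeries.coeff k (subst c f) = c ^ k * PowerSeries.coeff k f := by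
  rw [subst, PowerSeries.coeff_mk]

/-- Reindexing: shift in the second coordinate. -/
lemma sum_shift_snd (k : ℕ) (f : ℕ × ℕ → R) :
    ∑ p ∈ (M (k+1)).filter (fun p => p.2 ≠ 0), f (p.1, p.2 - 1) = ∑ p ∈ M k, f p := by
  refine Finset.sum_nbij' (fun p => (p.1, p.2 - 1)) (fun p => (p.1, p.2 + 1)) ?_ ?_ ?_ ?_ ?_
  · intro p hp
    simp only [Finset.mem_filter, mem_M] at hp ⊢
    omega
  · intro p hp
    simp only [Finset.mem_filter, mem_M] at hp ⊢
    omega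
  · intro p hp
    simp only [Finset.mem_filter, mem_M] at hp
    ext <;> simp <;> omega
  · intro p hp
    simp
  · intro p hp
    rfl

/-- Reindexing: shift in the first coordinate. -/
lemma sum_shift_fst (k : ℕ) (f : ℕ × ℕ → R) :
    ∑ p ∈ (M (k+2)).filter (fun p => p.1 ≠ 0), f (p.1 - 1, p.2) = ∑ p ∈ M k, f p := by
  refine Finset.sum_nbij' (fun p => (p.1 - 1, p.2)) (fun p => (p.1 + 1, p.2)) ?_ ?_ ?_ ?_ ?_
  · intro p hp
    simp only [Finset.mem_filter, mem_M] at hp ⊢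
    omega
  · intro p hp
    simp only [Finset.mem_filter, mem_M] at hp ⊢
    omega
  · intro p hp
    simp only [Finset.mem_filter, mem_M] at hp
    ext <;> simp <;> omega
  · intro p hp
    simp
  · intro p hp
    rfl

/-- Merge a natural power of `q` into an integer power. -/
lemma merge (k : ℕ) (a : ℤ) (u v : R) :
    (q : R) ^ k * (q ^ a * u * v) = q ^ ((k : ℤ) + a) * u * v := by
  rw [zpow_add₀ q_ne, zpow_natCast]; ring

lemma choose2_step (x : ℕ) : ((x+1+1).choose 2 : ℤ) = ((x+1).choose 2 : ℤ) + (x+1) := by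
  have h : (x+1+1).choose 2 = (x+1).choose 2 + (x+1) := by
    simp [Nat.choose_succ_succ, Nat.choose_zero_right, Nat.choose_one_right]
    omega
  push_cast [h]; ring

/-- plain exponent change -/
lemma core0 (a b : ℤ) (h : b = a) (u v : R) :
    q ^ a * u * v = q ^ b * u * v := by rw [h]

lemma coreA (a b c : ℤ) (j : ℕ) (hj : j ≠ 0) (hb : b = a + j) (hc : c = a) (Y w : R) :
    q ^ a * Y * (w * (1 - q ^ j))⁻¹
      = q ^ b * Y * (w * (1 - q ^ j))⁻¹ + q ^ c * Y * w⁻¹ := by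
  rw [hb, hc]
  have hB := inv_mul_cancel₀ (one_sub_q_pow_ne j hj)
  rw [mul_inv, zpow_add₀ q_ne, zpow_natCast]
  linear_combination (q ^ a * Y * w⁻¹) * hB

lemma coreB (a b c : ℤ) (i : ℕ) (hi : i ≠ 0) (hb : b = a + i) (hc : c = a) (w v : R) :
    q ^ a * (w * (1 - q ^ i))⁻¹ * v
      = q ^ b * (w * (1 - q ^ i))⁻¹ * v + q ^ c * w⁻¹ * v := by
  rw [hb, hc]
  have hA := inv_mul_cancel₀ (one_sub_q_pow_ne i hi)
  rw [mul_inv, zpow_add₀ q_ne, zpow_natCast]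
  linear_combination (q ^ a * w⁻¹ * v) * hA

lemma core2 (a b c d : ℤ) (i j : ℕ) (hi : i ≠ 0) (hj : j ≠ 0)
    (hb : b = a + i + j) (hc : c = a + i) (hd : d = a) (w v : R) :
    q ^ a * (w * (1 - q ^ i))⁻¹ * (v * (1 - q ^ j))⁻¹
      = q ^ b * (w * (1 - q ^ i))⁻¹ * (v * (1 - q ^ j))⁻¹
        + q ^ c * (w * (1 - q ^ i))⁻¹ * v⁻¹
        + q ^ d * w⁻¹ * (v * (1 - q ^ j))⁻¹ := by
  rw [hb, hc, hd]
  have hA := inv_mul_cancel₀ (one_sub_q_pow_ne i hi)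
  have hB := inv_mul_cancel₀ (one_sub_q_pow_ne j hj)
  rw [mul_inv, mul_inv, zpow_add₀ q_ne, zpow_add₀ q_ne, zpow_natCast, zpow_natCast]
  linear_combination (q ^ a * w⁻¹ * v⁻¹) * ((1 - q^j)⁻¹ * hA + q^i * (1-q^i)⁻¹ * hB)

lemma eq3 : S (-2) 0 = subst q (S (-4) (-1)) := by
  refine PowerSeries.ext fun k => ?_
  rw [coeff_S, coeff_subst, coeff_S, Finset.mul_sum]
  apply Finset.sum_congr rfl
  intro p hp
  obtain ⟨m, n⟩ := p
  have hk : 2 * m + n = k := mem_M.mp hp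
  have hk' : (k : ℤ) = 2 * m + n := by omega
  simp only [term]
  rw [merge]
  exact core0 _ _ (by push_cast; linarith [hk']) _ _

lemma eq4 : S 0 0 = subst q (S (-2) (-1)) := by
  refine PowerSeries.ext fun k => ?_
  rw [coeff_S, coeff_subst, coeff_S, Finset.mul_sum]
  apply Finset.sum_congr rfl
  intro p hp
  obtain ⟨m, n⟩ := p
  have hk : 2 * m + n = k := mem_M.mp hp
  have hk' : (k : ℤ) = 2 * m + n := by omega
  simp only [term]
  rw [merge]
  exact core0 _ _ (by push_cast; linarith [hk']) _ _


lemma eq2 : S (-2) (-1) = subst q (S (-4) (-1))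
    + PowerSeries.X * PowerSeries.C q * subst q (S (-2) 0) := by
  rw [mul_assoc PowerSeries.X]
  refine PowerSeries.ext fun k => ?_
  rw [map_add, coeff_subst, coeff_S, coeff_S]
  cases k with
  | zero =>
    rw [PowerSeries.coeff_zero_X_mul, add_zero, pow_zero, one_mul]
    refine Finset.sum_congr rfl fun p hp => ?_
    obtain ⟨m, n⟩ := p
    have hk : 2 * m + n = 0 := mem_M.mp hp
    obtain ⟨rfl, rfl⟩ : m = 0 ∧ n = 0 := by omega
    norm_num [term]
  | succ k =>
    rw [PowerSeries.coeff_succ_X_mul, PowerSeries.coeff_C_mul, coeff_subst, coeff_S,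
      ← mul_assoc q (q ^ k), ← pow_succ' q k, Finset.mul_sum, Finset.mul_sum,
      ← sum_shift_snd k (fun p => q ^ (k+1) * term (-2) 0 p), Finset.sum_filter,
      ← Finset.sum_add_distrib]
    refine Finset.sum_congr rfl fun p hp => ?_
    obtain ⟨m, n⟩ := p
    have hk : 2 * m + n = k + 1 := mem_M.mp hp
    cases n with
    | zero =>
      rw [if_neg (by simp : ¬ ((m, 0).2 ≠ 0)), add_zero]
      have hk' : (k : ℤ) + 1 = 2 * m := by omega
      simp only [term]
      rw [merge]
      exact core0 _ _ (by push_cast; linarith [hk']) _ _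
    | succ t =>
      rw [if_pos (Nat.succ_ne_zero t : (m, t+1).2 ≠ 0)]
      have hk' : (k : ℤ) + 1 = 2 * m + (t + 1) := by omega
      simp only [term, Nat.add_sub_cancel]
      rw [poch_succ q q t, show (q : R) * q ^ t = q ^ (t+1) from by ring, merge, merge]
      refine coreA _ _ _ (t+1) (Nat.succ_ne_zero t) ?_ ?_ _ _
      · push_cast [choose2_step]; linarith [hk']
      · push_cast [choose2_step]; linarith [hk']

lemma eq1 : S (-4) (-1) = subst q (S (-4) (-1))
    + PowerSeries.X * PowerSeries.C q * subst q (S (-2) 0)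
    + PowerSeries.X ^ 2 * PowerSeries.C (q ^ 2) * subst q (S 0 0) := by
  have hX2 : (PowerSeries.X : PowerSeries R) ^ 2 * PowerSeries.C (q ^ 2) * subst q (S 0 0)
      = PowerSeries.X * (PowerSeries.X * (PowerSeries.C (q ^ 2) * subst q (S 0 0))) := by
    ring
  rw [hX2, mul_assoc PowerSeries.X (PowerSeries.C q)]
  refine PowerSeries.ext fun k => ?_
  rw [map_add, map_add, coeff_subst, coeff_S]
  cases k with
  | zero =>
    rw [PowerSeries.coeff_zero_X_mul, PowerSeries.coeff_zero_X_mul, add_zero, add_zero,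
      pow_zero, one_mul]
  | succ k =>
    rw [PowerSeries.coeff_succ_X_mul, PowerSeries.coeff_succ_X_mul, PowerSeries.coeff_C_mul,
      coeff_subst, coeff_S, ← mul_assoc q (q ^ k), ← pow_succ' q k, Finset.mul_sum,
      Finset.mul_sum, ← sum_shift_snd k (fun p => q ^ (k+1) * term (-2) 0 p), Finset.sum_filter]
    cases k with
    | zero =>
      rw [PowerSeries.coeff_zero_X_mul, add_zero, ← Finset.sum_add_distrib]
      refine Finset.sum_congr rfl fun p hp => ?_
      obtain ⟨m, n⟩ := p
      have hk : 2 * m + n = 0 + 1 := mem_M.mp hp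
      obtain ⟨rfl, rfl⟩ : m = 0 ∧ n = 1 := by omega
      rw [if_pos (Nat.succ_ne_zero 0 : ((0:ℕ), 1).2 ≠ 0)]
      simp only [term, Nat.add_sub_cancel]
      rw [poch_succ q q 0, show (q : R) * q ^ 0 = q ^ (0+1) from by ring, merge, merge]
      refine coreA _ _ _ 1 one_ne_zero ?_ ?_ _ _
      · push_cast [choose2_step]; linarith
      · push_cast [choose2_step]; linarith
    | succ s =>
      rw [PowerSeries.coeff_succ_X_mul, PowerSeries.coeff_C_mul, coeff_subst, coeff_S,
        ← mul_assoc (q ^ 2) (q ^ s), ← pow_add q 2 s, Finset.mul_sum,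
        ← sum_shift_fst s (fun p => q ^ (2+s) * term 0 0 p), Finset.sum_filter,
        ← Finset.sum_add_distrib, ← Finset.sum_add_distrib]
      refine Finset.sum_congr rfl fun p hp => ?_
      obtain ⟨m, n⟩ := p
      have hk : 2 * m + n = s + 1 + 1 := mem_M.mp hp
      rcases m with _ | r <;> rcases n with _ | t
      · exfalso; omega
      · -- m = 0, n = t+1
        rw [if_neg (by simp : ¬ (((0:ℕ), t+1).1 ≠ 0)), add_zero,
          if_pos (Nat.succ_ne_zero t : ((0:ℕ), t+1).2 ≠ 0)]
        have hk' : (s : ℤ) + 2 = t + 1 := by omega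
        simp only [term, Nat.add_sub_cancel]
        rw [poch_succ q q t, show (q : R) * q ^ t = q ^ (t+1) from by ring, merge, merge]
        refine coreA _ _ _ (t+1) (Nat.succ_ne_zero t) ?_ ?_ _ _
        · push_cast [choose2_step]; linarith [hk']
        · push_cast [choose2_step]; linarith [hk']
      · -- m = r+1, n = 0
        rw [if_neg (by simp : ¬ ((r+1, (0:ℕ)).2 ≠ 0)), add_zero,
          if_pos (Nat.succ_ne_zero r : (r+1, (0:ℕ)).1 ≠ 0)]
        have hk' : (s : ℤ) + 2 = 2 * (r + 1) := by omega
        simp only [term, Nat.add_sub_cancel]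
        rw [poch_succ (q^2) (q^2) r, show (q : R) ^ 2 * (q^2) ^ r = q ^ (2*r+2) from by ring,
          merge, merge]
        refine coreB _ _ _ (2*r+2) (by omega) ?_ ?_ _ _
        · push_cast [choose2_step]; linarith [hk']
        · push_cast [choose2_step]; linarith [hk']
      · -- m = r+1, n = t+1
        rw [if_pos (Nat.succ_ne_zero t : (r+1, t+1).2 ≠ 0),
          if_pos (Nat.succ_ne_zero r : (r+1, t+1).1 ≠ 0)]
        have hk' : (s : ℤ) + 2 = 2 * (r + 1) + (t + 1) := by omega
        simp only [term, Nat.add_sub_cancel]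
        rw [poch_succ q q t, show (q : R) * q ^ t = q ^ (t+1) from by ring,
          poch_succ (q^2) (q^2) r, show (q : R) ^ 2 * (q^2) ^ r = q ^ (2*r+2) from by ring,
          merge, merge, merge]
        refine core2 _ _ _ _ (2*r+2) (t+1) (by omega) (Nat.succ_ne_zero t) ?_ ?_ ?_ _ _
        · push_cast [choose2_step]; linarith [hk']
        · push_cast [choose2_step]; linarith [hk']
        · push_cast [choose2_step]; linarith [hk']

theorem functional_equation_system :
    S (-4) (-1) = subst q (S (-4) (-1))
        + PowerSeries.X * PowerSeries.C q * subst q (S (-2) 0)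
        + PowerSeries.X ^ 2 * PowerSeries.C (q ^ 2) * subst q (S 0 0) ∧
    S (-2) (-1) = subst q (S (-4) (-1))
        + PowerSeries.X * PowerSeries.C q * subst q (S (-2) 0) ∧
    S (-2) 0 = subst q (S (-4) (-1)) ∧
    S 0 0 = subst q (S (-2) (-1)) := by
  exact ⟨eq1, eq2, eq3, eq4⟩
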